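/- Let n ∈ ℕ, 0 < q < 1, and v₁, …, vₙ ∈ ℂ. Then the n×n complex matrix whose (j,k) entry is θ₃(v_j − conj(v_k), q) = ∑_{ℓ∈ℤ} q^{ℓ²} e^{2πiℓ(v_j − conj(v_k))} is positive semidefinite. -/

import Mathlib

open Complex ComplexOrder

noncomputable def jacobiTheta3 (v : ℂ) (q : ℝ) : ℂ :=
  ∑' l : ℤ, (q : ℂ) ^ (l ^ 2) * Complex.exp (2 * Real.pi * Complex.I * l * v)

lemma theta3_term_eq (q : ℝ) (hq0 : 0 < q) (w : ℂ) (l : ℤ) :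
    (q : ℂ) ^ (l ^ 2) * Complex.exp (2 * Real.pi * Complex.I * l * w)
      = jacobiTheta₂_term l w (Real.log q * Complex.I⁻¹ / Real.pi) := by
  rw [jacobiTheta₂_term, Complex.exp_add, mul_comm]
  congr 1
  have : (Real.pi : ℂ) * Complex.I * l ^ 2 * ((Real.log q) * Complex.I⁻¹ / Real.pi) =
      ((l ^ 2 : ℤ) : ℂ) * (Real.log q : ℂ) := by
    push_cast
    field_simp
  rw [this, Complex.exp_int_mul]
  congr 1
  rw [← Complex.ofReal_exp, Real.exp_log hq0]

lemma theta3_summable (q : ℝ) (hq0 : 0 < q) (hq1 : q < 1) (w : ℂ) :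
    Summable (fun l : ℤ => (q : ℂ) ^ (l ^ 2) * Complex.exp (2 * Real.pi * Complex.I * l * w)) := by
  have h := (summable_jacobiTheta₂_term_iff w ((Real.log q) * Complex.I⁻¹ / Real.pi)).mpr ?_
  · exact h.congr fun l => (theta3_term_eq q hq0 w l).symm
  · have hlog : Real.log q < 0 := Real.log_neg hq0 hq1
    have h : ((Real.log q : ℂ) * Complex.I⁻¹ / Real.pi) = ((-Real.log q / Real.pi : ℝ) : ℂ) * Complex.I := by
      rw [Complex.inv_I]
      push_cast
      have : (Real.pi : ℂ) ≠ 0 := by exact_mod_cast Real.pi_ne_zero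
      field_simp
    rw [h, Complex.mul_I_im, Complex.ofReal_re]
    exact div_pos (neg_pos.mpr hlog) Real.pi_pos

theorem theta3_matrix_posSemidef (n : ℕ) (q : ℝ) (hq0 : 0 < q) (hq1 : q < 1)
    (v : Fin n → ℂ) :
    ∀ c : Fin n → ℂ,
      0 ≤ ∑ j : Fin n, ∑ k : Fin n,
        jacobiTheta3 (v j - (starRingEnd ℂ) (v k)) q * c j * (starRingEnd ℂ) (c k) := by
  intro c
  set G : Fin n → Fin n → ℤ → ℂ := fun j k l =>
    (q : ℂ) ^ (l ^ 2) * Complex.exp (2 * Real.pi * Complex.I * l * (v j - (starRingEnd ℂ) (v k)))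
      * c j * (starRingEnd ℂ) (c k) with hG
  have hGsum : ∀ j k, Summable (G j k) := by
    intro j k
    exact ((theta3_summable q hq0 hq1 _).mul_right _).mul_right _
  have step1 : ∀ j k : Fin n,
      jacobiTheta3 (v j - (starRingEnd ℂ) (v k)) q * c j * (starRingEnd ℂ) (c k)
        = ∑' l : ℤ, G j k l := by
    intro j k
    rw [jacobiTheta3, ← tsum_mul_right, ← tsum_mul_right]
  calc (0 : ℂ) ≤ ∑' l : ℤ, ∑ j : Fin n, ∑ k : Fin n, G j k l := ?_
    _ = ∑ j : Fin n, ∑ k : Fin n, ∑' l : ℤ, G j k l := by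
        rw [Summable.tsum_finsetSum (fun j _ => summable_sum (fun k _ => hGsum j k))]
        exact Finset.sum_congr rfl fun j _ => Summable.tsum_finsetSum (fun k _ => hGsum j k)
    _ = _ := Finset.sum_congr rfl fun j _ =>
        Finset.sum_congr rfl fun k _ => (step1 j k).symm
  -- nonnegativity of each term
  set T : ℤ → ℂ := fun l => ∑ j : Fin n, c j * Complex.exp (2 * Real.pi * Complex.I * l * v j)
    with hT
  have hterm : ∀ l : ℤ, ∑ j : Fin n, ∑ k : Fin n, G j k l
      = ((q ^ (l ^ 2) * Complex.normSq (T l) : ℝ) : ℂ) := by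
    intro l
    have hjk : ∀ j k : Fin n, G j k l = (q : ℂ) ^ (l ^ 2) *
        ((c j * Complex.exp (2 * Real.pi * Complex.I * l * v j)) *
          (starRingEnd ℂ) (c k * Complex.exp (2 * Real.pi * Complex.I * l * v k))) := by
      intro j k
      rw [hG]
      have h1 : (starRingEnd ℂ) (Complex.exp (2 * Real.pi * Complex.I * l * v k))
          = Complex.exp (-(2 * Real.pi * Complex.I * l * (starRingEnd ℂ) (v k))) := by
        rw [← Complex.exp_conj]
        congr 1
        simp only [map_mul, Complex.conj_I, Complex.conj_ofReal, map_ofNat, map_intCast]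
        ring
      beta_reduce
      rw [map_mul, h1, mul_sub, Complex.exp_sub, Complex.exp_neg]
      ring
    calc ∑ j : Fin n, ∑ k : Fin n, G j k l
        = (q : ℂ) ^ (l ^ 2) * (T l * (starRingEnd ℂ) (T l)) := by
          simp_rw [hjk, ← Finset.mul_sum, ← Finset.sum_mul, ← map_sum]
          rfl
      _ = _ := by
          rw [Complex.mul_conj, Complex.ofReal_mul, Complex.ofReal_zpow]
  simp_rw [hterm]
  rw [← Complex.ofReal_tsum]
  rw [Complex.zero_le_real]
  apply tsum_nonneg
  intro l
  exact mul_nonneg (zpow_nonneg hq0.le _) (Complex.normSq_nonneg _)
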